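/- If a sequence (x_n) in X is Fejér monotone with respect to a set S with nonempty interior, then (x_n) converges strongly and Σ_n ‖x_n − x_{n+1}‖ < ∞. -/

import Mathlib

theorem raik_fejer
    {X : Type*} [NormedAddCommGroup X] [InnerProductSpace ℝ X] [CompleteSpace X]
    (S : Set X) (hS : (interior S).Nonempty)
    (x : ℕ → X) (hfejer : ∀ s ∈ S, ∀ n : ℕ, ‖x (n + 1) - s‖ ≤ ‖x n - s‖) :
    (∃ L : X, Filter.Tendsto x Filter.atTop (nhds L)) ∧
      Summable (fun n : ℕ => ‖x n - x (n + 1)‖) := by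
  obtain ⟨c, hc⟩ := hS
  obtain ⟨ε, hε, hball⟩ := Metric.isOpen_iff.mp isOpen_interior c hc
  set r : ℝ := ε / 2 with hrdef
  have hr : 0 < r := by positivity
  have hsub : ∀ y : X, ‖y - c‖ ≤ r → y ∈ S := by
    intro y hy
    apply interior_subset
    apply hball
    rw [Metric.mem_ball, dist_eq_norm]
    linarith
  -- Key inequality
  have key : ∀ n : ℕ, 2 * r * ‖x n - x (n + 1)‖ ≤ ‖x n - c‖ ^ 2 - ‖x (n + 1) - c‖ ^ 2 := by
    intro n
    set d : X := x n - x (n + 1) with hd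
    by_cases hd0 : d = 0
    · have hx : x n = x (n + 1) := sub_eq_zero.mp hd0
      rw [hd]
      rw [hx]
      simp
    · have hdn : (0 : ℝ) < ‖d‖ := norm_pos_iff.mpr hd0
      set t : ℝ := r / ‖d‖ with ht
      have htpos : 0 < t := by positivity
      set s : X := c + t • d with hs
      have hsS : s ∈ S := by
        apply hsub
        have : s - c = t • d := by rw [hs]; abel
        rw [this, norm_smul, Real.norm_eq_abs, abs_of_pos htpos, ht]
        field_simp
        exact le_rfl
      have h1 := hfejer s hsS n
      have h2 : ‖x (n + 1) - s‖ ^ 2 ≤ ‖x n - s‖ ^ 2 := by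
        apply pow_le_pow_left₀ (norm_nonneg _) h1
      have ea : x (n + 1) - s = (x (n + 1) - c) - t • d := by rw [hs]; abel
      have eb : x n - s = (x n - c) - t • d := by rw [hs]; abel
      rw [ea, eb] at h2
      have e1 : ‖(x (n + 1) - c) - t • d‖ ^ 2
          = ‖x (n + 1) - c‖ ^ 2 - 2 * inner ℝ (x (n + 1) - c) (t • d) + ‖t • d‖ ^ 2 :=
        norm_sub_sq_real _ _
      have e2 : ‖(x n - c) - t • d‖ ^ 2
          = ‖x n - c‖ ^ 2 - 2 * inner ℝ (x n - c) (t • d) + ‖t • d‖ ^ 2 :=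
        norm_sub_sq_real _ _
      rw [e1, e2] at h2
      have hinner : (inner ℝ (x n - c) (t • d) : ℝ) - inner ℝ (x (n + 1) - c) (t • d)
          = t * ‖d‖ ^ 2 := by
        rw [← inner_sub_left]
        have : (x n - c) - (x (n + 1) - c) = d := by rw [hd]; abel
        rw [this, real_inner_smul_right, real_inner_self_eq_norm_sq]
      have htd : t * ‖d‖ ^ 2 = r * ‖d‖ := by
        rw [ht]; field_simp
      nlinarith [h2, hinner, htd]
  -- Summability
  have hsum : Summable (fun n : ℕ => ‖x n - x (n + 1)‖) := by
    apply summable_of_sum_range_le (c := ‖x 0 - c‖ ^ 2 / (2 * r))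
        (fun n => norm_nonneg _)
    intro n
    have htel : ∀ m : ℕ, 2 * r * (∑ i ∈ Finset.range m, ‖x i - x (i + 1)‖)
        ≤ ‖x 0 - c‖ ^ 2 - ‖x m - c‖ ^ 2 := by
      intro m
      induction m with
      | zero => simp
      | succ k ih =>
        rw [Finset.sum_range_succ, mul_add]
        linarith [key k]
    have h2r : (0:ℝ) < 2 * r := by linarith
    rw [le_div_iff₀ h2r]
    nlinarith [htel n, sq_nonneg (‖x n - c‖)]
  refine ⟨?_, hsum⟩
  have hcauchy : CauchySeq x := by
    apply cauchySeq_of_summable_dist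
    simpa [dist_eq_norm] using hsum
  exact cauchySeq_tendsto_of_complete hcauchy
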